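/- Let H be a bounded self-adjoint operator on a complex Hilbert space, let ξ ∈ ℝ, δ > 0, η ≥ 0, and let f be a vector with ‖f‖ = 1 and ‖Hf − ξf‖ ≤ η. Let φ : ℝ → ℝ be continuous with 0 ≤ φ(t) ≤ 1 for all t and with φ(t) = 1 whenever |t − ξ| ≤ δ. Then Re⟨f, φ(H) f⟩ ≥ 1 − η/δ. -/

import Mathlib

/-- If `f` is a unit vector with `‖Hf − ξf‖ ≤ η` and `φ` is a continuous function with
values in `[0,1]` equal to `1` on `[ξ−δ, ξ+δ]`, then `Re⟨f, φ(H) f⟩ ≥ 1 − η/δ`. -/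
theorem inner_cfc_ge_of_approx_eigenfunction
    {E : Type*} [NormedAddCommGroup E] [InnerProductSpace ℂ E] [CompleteSpace E]
    (H : E →L[ℂ] E) (hH : IsSelfAdjoint H) (ξ δ η : ℝ) (hδ : 0 < δ) (hη : 0 ≤ η)
    (f : E) (hf : ‖f‖ = 1) (happrox : ‖H f - (ξ : ℂ) • f‖ ≤ η)
    (φ : ℝ → ℝ) (hφc : Continuous φ) (hφ0 : ∀ t, 0 ≤ φ t) (hφ1 : ∀ t, φ t ≤ 1)
    (hφwin : ∀ t, |t - ξ| ≤ δ → φ t = 1) :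
    1 - η / δ ≤ (inner ℂ f (cfc φ H f) : ℂ).re := by
  have hpos : (0 : E →L[ℂ] E) ≤ cfc φ H := cfc_nonneg fun x _ => hφ0 x
  have hpos' : (cfc φ H).IsPositive :=
    (ContinuousLinearMap.nonneg_iff_isPositive _).mp hpos
  have hδ2 : (0:ℝ) < δ ^ 2 := by positivity
  rcases le_or_gt δ η with hcase | hcase
  · have h1 : (1 : ℝ) ≤ η / δ := (one_le_div hδ).mpr hcase
    have h0 := hpos'.inner_nonneg_right f
    replace h0 := (Complex.nonneg_iff.mp h0).1
    linarith
  · -- main case: η < δ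
    set g : ℝ → ℝ := fun t => 1 - δ⁻¹ ^ 2 * (t - ξ) ^ 2 with hg
    have hgle : ∀ t, g t ≤ φ t := by
      intro t
      rcases le_or_gt |t - ξ| δ with h | h
      · have := hφwin t h
        have h2 : 0 ≤ δ⁻¹ ^ 2 * (t - ξ) ^ 2 := by positivity
        simp only [hg]; linarith
      · have h2 : δ ^ 2 < (t - ξ) ^ 2 := by
          have := abs_nonneg (t - ξ)
          nlinarith [sq_abs (t - ξ)]
        have h3 : 1 < δ⁻¹ ^ 2 * (t - ξ) ^ 2 := by
          rw [inv_pow, ← div_eq_inv_mul, lt_div_iff₀ hδ2]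
          linarith
        have := hφ0 t
        simp only [hg]; linarith
    have hmono : cfc g H ≤ cfc φ H := cfc_mono fun x _ => hgle x
    have hinner : (inner ℂ f (cfc g H f) : ℂ).re ≤ (inner ℂ f (cfc φ H f) : ℂ).re := by
      have h := ((ContinuousLinearMap.le_def _ _).mp hmono).inner_nonneg_right f
      simp only [ContinuousLinearMap.coe_sub', Pi.sub_apply, inner_sub_right, map_sub,
        RCLike.re_to_complex] at h
      replace h := (Complex.nonneg_iff.mp h).1
      rw [Complex.sub_re] at h
      linarith
    refine le_trans ?_ hinner
    -- compute cfc g H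
    set S : E →L[ℂ] E := H - algebraMap ℝ (E →L[ℂ] E) ξ with hSdef
    have hScfc : cfc (fun t : ℝ => t - ξ) H = S := by
      rw [cfc_sub (fun t : ℝ => t) (fun _ : ℝ => ξ) H (by fun_prop) (by fun_prop),
        cfc_id' ℝ H, cfc_const ξ H]
    have hcfcg : cfc g H = 1 - δ⁻¹ ^ 2 • S ^ 2 := by
      calc cfc g H = cfc (fun t : ℝ => (1:ℝ) - δ⁻¹ ^ 2 • ((t - ξ) ^ 2)) H := by
            simp only [smul_eq_mul, hg]
        _ = cfc (fun _ : ℝ => (1:ℝ)) H - cfc (fun t : ℝ => δ⁻¹ ^ 2 • ((t - ξ) ^ 2)) H :=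
            cfc_sub _ _ H (by fun_prop) (by fun_prop)
        _ = 1 - δ⁻¹ ^ 2 • cfc (fun t : ℝ => (t - ξ) ^ 2) H := by
            rw [cfc_const_one ℝ H, cfc_smul _ _ H (by fun_prop)]
        _ = 1 - δ⁻¹ ^ 2 • (cfc (fun t : ℝ => t - ξ) H) ^ 2 := by
            rw [cfc_pow _ 2 H (by fun_prop)]
        _ = 1 - δ⁻¹ ^ 2 • S ^ 2 := by rw [hScfc]
    have hSsa : IsSelfAdjoint S := by
      rw [← hScfc]; exact cfc_predicate _ H
    have hSsym := (ContinuousLinearMap.isSelfAdjoint_iff_isSymmetric).mp hSsa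
    have hSf : S f = H f - (ξ : ℂ) • f := by
      simp [hSdef, Algebra.algebraMap_eq_smul_one, ContinuousLinearMap.smul_apply,
        ContinuousLinearMap.one_apply, Complex.coe_smul]
    have hkey : (inner ℂ f (cfc g H f) : ℂ).re = 1 - δ⁻¹ ^ 2 * ‖S f‖ ^ 2 := by
      rw [hcfcg]
      have hinner2 : (inner ℂ f ((S ^ 2) f) : ℂ) = inner ℂ (S f) (S f) := by
        have h2 : (S ^ 2) f = S (S f) := by simp [pow_two]
        rw [h2]
        exact (hSsym f (S f)).symm
      have happ : ((1 : E →L[ℂ] E) - δ⁻¹ ^ 2 • S ^ 2) f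
          = f - (δ⁻¹ ^ 2 : ℝ) • ((S ^ 2) f) := by simp
      have hff : (inner ℂ f f : ℂ) = 1 := by
        rw [inner_self_eq_norm_sq_to_K]; norm_num [hf]
      have hss : (inner ℂ (S f) (S f) : ℂ) = ((‖S f‖ ^ 2 : ℝ) : ℂ) := by
        push_cast
        exact inner_self_eq_norm_sq_to_K ..
      rw [happ, inner_sub_right, inner_smul_right_eq_smul, hinner2, hff, hss]
      rw [Complex.sub_re, Complex.smul_re, Complex.one_re, Complex.ofReal_re]
      rw [smul_eq_mul]
    rw [hkey, hSf]
    have hn : ‖H f - (ξ:ℂ) • f‖ ^ 2 ≤ η ^ 2 := by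
      have := norm_nonneg (H f - (ξ:ℂ) • f)
      nlinarith
    have h4 : δ⁻¹ ^ 2 * ‖H f - (ξ:ℂ) • f‖ ^ 2 ≤ δ⁻¹ ^ 2 * η ^ 2 :=
      mul_le_mul_of_nonneg_left hn (by positivity)
    have h5 : δ⁻¹ ^ 2 * η ^ 2 ≤ η / δ := by
      rw [inv_pow, ← div_eq_inv_mul, div_le_div_iff₀ hδ2 hδ]
      nlinarith [mul_nonneg hη (mul_nonneg hδ.le (sub_nonneg.mpr hcase.le))]
    linarith
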